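/- Let w be a permutation of {1,…,n} and 1 ≤ i ≤ n−1. (a) If inv(s_i·w) = inv(w) − 1 (where s_i·w exchanges the values i and i+1 in w) and raj(s_i·w) = raj(w), then rajcode(s_i·w) = rajcode(w). (b) If w(i) > w(i+1) (so inv(w·s_i) = inv(w) − 1, where w·s_i exchanges the entries in positions i and i+1) and raj(w·s_i) = raj(w), then, writing rajcode(w) = (r_1,…,r_n), one has rajcode(w·s_i) = (r_1,…,r_{i−1}, r_{i+1}+1, r_i−1, r_{i+2},…,r_n). -/

import Mathlib

open scoped Classical

noncomputable section

namespace RajRegularity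

variable {n : ℕ}

/-- Maximal length of an increasing subsequence of `w(i), …, w(n)` beginning with `w(i)`:
the largest cardinality of a set `s` of positions that contains `i`, consists of positions
`≥ i`, and on which `w` is strictly increasing. -/
def lisFrom (w : Equiv.Perm (Fin n)) (i : Fin n) : ℕ :=
  (Finset.univ.filter fun s : Finset (Fin n) =>
      i ∈ s ∧ (∀ j ∈ s, i ≤ j) ∧ ∀ j ∈ s, ∀ k ∈ s, j < k → w j < w k).sup Finset.card

/-- `rajCode w i = (n − i + 1) −` (maximal length of an increasing subsequence of
`w(i), …, w(n)` beginning with `w(i)`); here positions are 0-based, so the number of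
positions `≥ i` is `n - i`. -/
def rajCode (w : Equiv.Perm (Fin n)) (i : Fin n) : ℕ :=
  (n - (i : ℕ)) - lisFrom w i

/-- The Rajchgot index `raj w = Σᵢ rajCode w i`. -/
def raj (w : Equiv.Perm (Fin n)) : ℕ := ∑ i, rajCode w i

/-- The number of inversions of `w`: pairs of positions `i < j` with `w i > w j`. -/
def invNum (w : Equiv.Perm (Fin n)) : ℕ :=
  (Finset.univ.filter fun p : Fin n × Fin n => p.1 < p.2 ∧ w p.2 < w p.1).card

/-- The `i`-th entry of the inv code: `ℓ_i(w) = #{ j : i < j, w j < w i }`. -/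
def ellCode (w : Equiv.Perm (Fin n)) (i : Fin n) : ℕ :=
  (Finset.univ.filter fun j : Fin n => i < j ∧ w j < w i).card

/-- The set of descent positions of `w` (0-based position `j` with `w j > w (j+1)`). -/
def descents (w : Equiv.Perm (Fin n)) : Finset (Fin n) :=
  Finset.univ.filter fun j : Fin n =>
    if h : (j : ℕ) + 1 < n then w ⟨(j : ℕ) + 1, h⟩ < w j else False

/-- The major index: the sum of the (1-based) descent positions of `w`. -/
def maj (w : Equiv.Perm (Fin n)) : ℕ := ∑ j ∈ descents w, ((j : ℕ) + 1)

/-- `mCode w i`: the number of descents of `w` at positions `≥ i`. -/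
def mCode (w : Equiv.Perm (Fin n)) (i : Fin n) : ℕ :=
  ((descents w).filter fun j => i ≤ j).card

/-- `w` is dominant iff it avoids the pattern 132. -/
def Dominant (w : Equiv.Perm (Fin n)) : Prop :=
  ¬ ∃ i j k : Fin n, i < j ∧ j < k ∧ w i < w k ∧ w k < w j

/-- `w` is fireworks iff there are no positions `i < j` with `w j < w (j+1) < w i`. -/
def Fireworks (w : Equiv.Perm (Fin n)) : Prop :=
  ¬ ∃ (i j : Fin n) (h : (j : ℕ) + 1 < n),
      i < j ∧ w j < w ⟨(j : ℕ) + 1, h⟩ ∧ w ⟨(j : ℕ) + 1, h⟩ < w i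

/-- `w` is inverse fireworks iff `w⁻¹` is fireworks. -/
def InvFireworks (w : Equiv.Perm (Fin n)) : Prop := Fireworks w⁻¹

/-- `w` is a valley permutation: for some `a`, it is strictly decreasing on positions `≤ a`
and strictly increasing on positions `≥ a`. -/
def Valley (w : Equiv.Perm (Fin n)) : Prop :=
  ∃ a : ℕ, (∀ i j : Fin n, i < j → (j : ℕ) ≤ a → w j < w i) ∧
    ∀ i j : Fin n, a ≤ (i : ℕ) → i < j → w i < w j

/-- `eps w i` is the (1-based) blob index `ε_i(w) = i + r_i(w)`. -/
def eps (w : Equiv.Perm (Fin n)) (i : Fin n) : ℕ := (i : ℕ) + 1 + rajCode w i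

/-- The shape of `w`: `α_k(w) = #{ i : ε_i(w) = k }` (here `k : Fin n` stands for the
1-based index `k + 1`). -/
def shape (w : Equiv.Perm (Fin n)) : Fin n → ℕ := fun k =>
  (Finset.univ.filter fun i : Fin n => eps w i = (k : ℕ) + 1).card

/-- Dominance order on shapes: `α ⪰ β` iff every tail sum of `α` is at least the
corresponding tail sum of `β`. -/
def Dominates (α β : Fin n → ℕ) : Prop :=
  ∀ m : Fin n,
    ∑ k ∈ Finset.univ.filter (fun k : Fin n => m ≤ k), β k ≤
      ∑ k ∈ Finset.univ.filter (fun k : Fin n => m ≤ k), α k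

/-- Right weak order: `u ≤_R w` iff `w = u * v` length-additively. -/
def leR (u w : Equiv.Perm (Fin n)) : Prop :=
  ∃ v : Equiv.Perm (Fin n), w = u * v ∧ invNum w = invNum u + invNum v

/-- Left weak order: `u ≤_L w` iff `w = v * u` length-additively. -/
def leL (u w : Equiv.Perm (Fin n)) : Prop :=
  ∃ v : Equiv.Perm (Fin n), w = v * u ∧ invNum w = invNum v + invNum u

/-- Two-sided weak order: the transitive closure of the union of left and right weak
orders (both are reflexive, so we may use the reflexive-transitive closure). -/
def leLR (u w : Equiv.Perm (Fin n)) : Prop :=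
  Relation.ReflTransGen (fun a b : Equiv.Perm (Fin n) => leL a b ∨ leR a b) u w

/-- The maximum of the block of the set partition `π(w)` containing the value `v`;
the block of `v` is `{ v' : ε_{w⁻¹ v'}(w) = ε_{w⁻¹ v}(w) }`. -/
def blockMax (w : Equiv.Perm (Fin n)) (v : Fin n) : ℕ :=
  ((Finset.univ.filter fun v' : Fin n => eps w (w⁻¹ v') = eps w (w⁻¹ v)).max'
      ⟨v, Finset.mem_filter.mpr ⟨Finset.mem_univ v, rfl⟩⟩).val

/-- The fireworks map `Φ`: the one-line word of `Φ w` lists the blocks of `π(w)` in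
increasing order of their maxima, each block written in decreasing order.  Equivalently,
`Φ w` sorts the values by the key (max of block, value reversed), lexicographically. -/
def Phi (w : Equiv.Perm (Fin n)) : Equiv.Perm (Fin n) :=
  Tuple.sort fun v : Fin n => n * blockMax w v + (n - 1 - (v : ℕ))

/-- The inverse fireworks map `Φ_inv w = Φ(w⁻¹)⁻¹`. -/
def PhiInv (w : Equiv.Perm (Fin n)) : Equiv.Perm (Fin n) := (Phi w⁻¹)⁻¹

/-- Partial sums of a sequence of block sizes. -/
def psum (a : ℕ → ℕ) (m : ℕ) : ℕ := ∑ j ∈ Finset.range m, a j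

/-- The index of the block (interval `[psum a m, psum a (m+1))`) containing the value `v`. -/
def blockIdx (n : ℕ) (a : ℕ → ℕ) (v : Fin n) : ℕ :=
  ((Finset.range n).filter fun m => psum a (m + 1) ≤ (v : ℕ)).card

/-- The layered permutation with block sizes `a 0, a 1, …`: it reverses each of the
consecutive intervals `[psum a m, psum a (m+1))` of `{0, …, n-1}`.  Equivalently, its
one-line word sorts the values by (block index, value reversed) lexicographically. -/
def layered (n : ℕ) (a : ℕ → ℕ) : Equiv.Perm (Fin n) :=
  Tuple.sort fun v : Fin n => n * blockIdx n a v + (n - 1 - (v : ℕ))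

/-- The layered permutation `e_α` associated to a shape `α : Fin n → ℕ`. -/
def eOf (α : Fin n → ℕ) : Equiv.Perm (Fin n) :=
  layered n fun m => if h : m < n then α ⟨m, h⟩ else 0

private lemma le_lisFrom (w : Equiv.Perm (Fin n)) (k : Fin n) (s : Finset (Fin n))
    (h1 : k ∈ s) (h2 : ∀ m ∈ s, k ≤ m)
    (h3 : ∀ a ∈ s, ∀ b ∈ s, a < b → w a < w b) : s.card ≤ lisFrom w k :=
  Finset.le_sup (Finset.mem_filter.mpr ⟨Finset.mem_univ _, h1, h2, h3⟩)

private lemma lisFrom_le {w : Equiv.Perm (Fin n)} {k : Fin n} {X : ℕ}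
    (h : ∀ s : Finset (Fin n), k ∈ s → (∀ m ∈ s, k ≤ m) →
      (∀ a ∈ s, ∀ b ∈ s, a < b → w a < w b) → s.card ≤ X) : lisFrom w k ≤ X := by
  refine Finset.sup_le fun s hs => ?_
  obtain ⟨-, h1, h2, h3⟩ := Finset.mem_filter.mp hs
  exact h s h1 h2 h3

private lemma lisFrom_le_bound (w : Equiv.Perm (Fin n)) (k : Fin n) :
    lisFrom w k ≤ n - (k : ℕ) := by
  refine lisFrom_le fun s h1 h2 h3 => ?_
  calc s.card ≤ (Finset.Ici k).card :=
        Finset.card_le_card fun m hm => Finset.mem_Ici.mpr (h2 m hm)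
    _ = n - (k : ℕ) := Fin.card_Ici k

private lemma lisFrom_le_bound' {w : Equiv.Perm (Fin n)} {i j : Fin n}
    (hij : (j : ℕ) = (i : ℕ) + 1) (hd : w j < w i) :
    lisFrom w i ≤ n - (i : ℕ) - 1 := by
  have hlt : i < j := by rw [Fin.lt_def]; omega
  refine lisFrom_le fun s h1 h2 h3 => ?_
  have hjs : j ∉ s := fun hj => absurd (h3 i h1 j hj hlt) (not_lt.mpr hd.le)
  have hsub : s ⊆ (Finset.Ici i).erase j := fun m hm =>
    Finset.mem_erase.mpr ⟨fun e => hjs (e ▸ hm), Finset.mem_Ici.mpr (h2 m hm)⟩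
  calc s.card ≤ ((Finset.Ici i).erase j).card := Finset.card_le_card hsub
    _ = (Finset.Ici i).card - 1 := Finset.card_erase_of_mem (Finset.mem_Ici.mpr hlt.le)
    _ = n - (i : ℕ) - 1 := by rw [Fin.card_Ici]

private lemma b1ge {w : Equiv.Perm (Fin n)} {i j : Fin n}
    (hij : (j : ℕ) = (i : ℕ) + 1) {k : Fin n} (hk : (j : ℕ) < (k : ℕ)) :
    lisFrom w k ≤ lisFrom (w * Equiv.swap i j) k := by
  refine lisFrom_le fun s h1 h2 h3 => le_lisFrom _ _ s h1 h2 ?_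
  have hval : ∀ m ∈ s, (w * Equiv.swap i j) m = w m := by
    intro m hm
    have hkm := h2 m hm
    rw [Fin.le_def] at hkm
    have hmi : m ≠ i := fun e => by rw [e] at hkm; omega
    have hmj : m ≠ j := fun e => by rw [e] at hkm; omega
    rw [Equiv.Perm.mul_apply, Equiv.swap_apply_of_ne_of_ne hmi hmj]
  intro a ha b hb hab
  rw [hval a ha, hval b hb]
  exact h3 a ha b hb hab

private lemma b2ge {w : Equiv.Perm (Fin n)} {i j : Fin n}
    (hij : (j : ℕ) = (i : ℕ) + 1) (hd : w j < w i) :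
    lisFrom w i ≤ lisFrom (w * Equiv.swap i j) j := by
  have hlt : i < j := by rw [Fin.lt_def]; omega
  refine lisFrom_le fun s h1 h2 h3 => ?_
  have hjs : j ∉ s := fun hj => absurd (h3 i h1 j hj hlt) (not_lt.mpr hd.le)
  have hcard : (insert j (s.erase i)).card = s.card := by
    rw [Finset.card_insert_of_notMem (fun h => hjs (Finset.mem_erase.mp h).2),
      Finset.card_erase_of_mem h1]
    have hc : 1 ≤ s.card := Finset.card_pos.mpr ⟨i, h1⟩
    omega
  rw [← hcard]
  refine le_lisFrom _ _ _ (Finset.mem_insert_self _ _) ?_ ?_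
  · intro m hm
    rcases Finset.mem_insert.mp hm with heqm | hm'
    · exact le_of_eq heqm.symm
    · obtain ⟨hmi, hms⟩ := Finset.mem_erase.mp hm'
      have h2' := h2 m hms
      have hne : (m : ℕ) ≠ (i : ℕ) := fun e => hmi (Fin.ext e)
      rw [Fin.le_def] at h2' ⊢
      omega
  · intro a ha b hb hab
    rcases Finset.mem_insert.mp ha with heqa | ha'
    · rcases Finset.mem_insert.mp hb with heqb | hb'
      · rw [heqa, heqb] at hab; exact absurd hab (lt_irrefl _)
      · rw [heqa] at hab ⊢
        obtain ⟨hbi, hbs⟩ := Finset.mem_erase.mp hb'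
        have hbj : b ≠ j := fun e => hjs (e ▸ hbs)
        have hblt : i < b := lt_of_le_of_ne (h2 b hbs) (Ne.symm hbi)
        rw [Equiv.Perm.mul_apply, Equiv.Perm.mul_apply, Equiv.swap_apply_right,
          Equiv.swap_apply_of_ne_of_ne hbi hbj]
        exact h3 i h1 b hbs hblt
    · rcases Finset.mem_insert.mp hb with heqb | hb'
      · rw [heqb] at hab ⊢
        obtain ⟨hai, has⟩ := Finset.mem_erase.mp ha'
        have hia := h2 a has
        have hne : (a : ℕ) ≠ (i : ℕ) := fun e => hai (Fin.ext e)
        rw [Fin.le_def] at hia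
        rw [Fin.lt_def] at hab
        omega
      · obtain ⟨hai, has⟩ := Finset.mem_erase.mp ha'
        obtain ⟨hbi, hbs⟩ := Finset.mem_erase.mp hb'
        have haj : a ≠ j := fun e => hjs (e ▸ has)
        have hbj : b ≠ j := fun e => hjs (e ▸ hbs)
        rw [Equiv.Perm.mul_apply, Equiv.Perm.mul_apply,
          Equiv.swap_apply_of_ne_of_ne hai haj, Equiv.swap_apply_of_ne_of_ne hbi hbj]
        exact h3 a has b hbs hab

private lemma b2le {w : Equiv.Perm (Fin n)} {i j : Fin n}
    (hij : (j : ℕ) = (i : ℕ) + 1) :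
    lisFrom (w * Equiv.swap i j) j ≤ lisFrom w i := by
  have hlt : i < j := by rw [Fin.lt_def]; omega
  refine lisFrom_le fun s h1 h2 h3 => ?_
  have his : i ∉ s := fun hi => absurd (h2 i hi) (not_le.mpr hlt)
  have hcard : (insert i (s.erase j)).card = s.card := by
    rw [Finset.card_insert_of_notMem (fun h => his (Finset.mem_erase.mp h).2),
      Finset.card_erase_of_mem h1]
    have hc : 1 ≤ s.card := Finset.card_pos.mpr ⟨j, h1⟩
    omega
  rw [← hcard]
  refine le_lisFrom _ _ _ (Finset.mem_insert_self _ _) ?_ ?_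
  · intro m hm
    rcases Finset.mem_insert.mp hm with heqm | hm'
    · exact le_of_eq heqm.symm
    · obtain ⟨-, hms⟩ := Finset.mem_erase.mp hm'
      exact le_trans hlt.le (h2 m hms)
  · intro a ha b hb hab
    rcases Finset.mem_insert.mp ha with heqa | ha'
    · rcases Finset.mem_insert.mp hb with heqb | hb'
      · rw [heqa, heqb] at hab; exact absurd hab (lt_irrefl _)
      · rw [heqa] at hab ⊢
        obtain ⟨hbj, hbs⟩ := Finset.mem_erase.mp hb'
        have hbi : b ≠ i := fun e => his (e ▸ hbs)
        have hblt : j < b := lt_of_le_of_ne (h2 b hbs) (Ne.symm hbj)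
        have key := h3 j h1 b hbs hblt
        rw [Equiv.Perm.mul_apply, Equiv.Perm.mul_apply, Equiv.swap_apply_right,
          Equiv.swap_apply_of_ne_of_ne hbi hbj] at key
        exact key
    · rcases Finset.mem_insert.mp hb with heqb | hb'
      · rw [heqb] at hab ⊢
        obtain ⟨-, has⟩ := Finset.mem_erase.mp ha'
        exact absurd (lt_of_lt_of_le hlt (h2 a has)) (not_lt.mpr hab.le)
      · obtain ⟨haj, has⟩ := Finset.mem_erase.mp ha'
        obtain ⟨hbj, hbs⟩ := Finset.mem_erase.mp hb'
        have hai : a ≠ i := fun e => his (e ▸ has)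
        have hbi : b ≠ i := fun e => his (e ▸ hbs)
        have key := h3 a has b hbs hab
        rw [Equiv.Perm.mul_apply, Equiv.Perm.mul_apply,
          Equiv.swap_apply_of_ne_of_ne hai haj, Equiv.swap_apply_of_ne_of_ne hbi hbj] at key
        exact key

private lemma b3ge {w : Equiv.Perm (Fin n)} {i j : Fin n}
    (hij : (j : ℕ) = (i : ℕ) + 1) :
    lisFrom w j ≤ lisFrom (w * Equiv.swap i j) i := by
  have hlt : i < j := by rw [Fin.lt_def]; omega
  refine lisFrom_le fun s h1 h2 h3 => ?_
  have his : i ∉ s := fun hi => absurd (h2 i hi) (not_le.mpr hlt)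
  have hcard : (insert i (s.erase j)).card = s.card := by
    rw [Finset.card_insert_of_notMem (fun h => his (Finset.mem_erase.mp h).2),
      Finset.card_erase_of_mem h1]
    have hc : 1 ≤ s.card := Finset.card_pos.mpr ⟨j, h1⟩
    omega
  rw [← hcard]
  refine le_lisFrom _ _ _ (Finset.mem_insert_self _ _) ?_ ?_
  · intro m hm
    rcases Finset.mem_insert.mp hm with heqm | hm'
    · exact le_of_eq heqm.symm
    · obtain ⟨-, hms⟩ := Finset.mem_erase.mp hm'
      exact le_trans hlt.le (h2 m hms)
  · intro a ha b hb hab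
    rcases Finset.mem_insert.mp ha with heqa | ha'
    · rcases Finset.mem_insert.mp hb with heqb | hb'
      · rw [heqa, heqb] at hab; exact absurd hab (lt_irrefl _)
      · rw [heqa] at hab ⊢
        obtain ⟨hbj, hbs⟩ := Finset.mem_erase.mp hb'
        have hbi : b ≠ i := fun e => his (e ▸ hbs)
        have hblt : j < b := lt_of_le_of_ne (h2 b hbs) (Ne.symm hbj)
        rw [Equiv.Perm.mul_apply, Equiv.Perm.mul_apply, Equiv.swap_apply_left,
          Equiv.swap_apply_of_ne_of_ne hbi hbj]
        exact h3 j h1 b hbs hblt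
    · rcases Finset.mem_insert.mp hb with heqb | hb'
      · rw [heqb] at hab ⊢
        obtain ⟨-, has⟩ := Finset.mem_erase.mp ha'
        exact absurd (lt_of_lt_of_le hlt (h2 a has)) (not_lt.mpr hab.le)
      · obtain ⟨haj, has⟩ := Finset.mem_erase.mp ha'
        obtain ⟨hbj, hbs⟩ := Finset.mem_erase.mp hb'
        have hai : a ≠ i := fun e => his (e ▸ has)
        have hbi : b ≠ i := fun e => his (e ▸ hbs)
        rw [Equiv.Perm.mul_apply, Equiv.Perm.mul_apply,
          Equiv.swap_apply_of_ne_of_ne hai haj, Equiv.swap_apply_of_ne_of_ne hbi hbj]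
        exact h3 a has b hbs hab

private lemma b4ge {w : Equiv.Perm (Fin n)} {i j : Fin n}
    (hij : (j : ℕ) = (i : ℕ) + 1) (hd : w j < w i) {k : Fin n} (hk : (k : ℕ) < (i : ℕ)) :
    lisFrom w k ≤ lisFrom (w * Equiv.swap i j) k := by
  have hlt : i < j := by rw [Fin.lt_def]; omega
  have hki : k ≠ i := fun e => by rw [e] at hk; omega
  have hkj : k ≠ j := fun e => by
    have := congrArg Fin.val e; omega
  refine lisFrom_le fun s h1 h2 h3 => ?_
  by_cases hi : i ∈ s
  · have hjs : j ∉ s := fun hj => absurd (h3 i hi j hj hlt) (not_lt.mpr hd.le)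
    have hcard : (insert j (s.erase i)).card = s.card := by
      rw [Finset.card_insert_of_notMem (fun h => hjs (Finset.mem_erase.mp h).2),
        Finset.card_erase_of_mem hi]
      have hc : 1 ≤ s.card := Finset.card_pos.mpr ⟨i, hi⟩
      omega
    rw [← hcard]
    refine le_lisFrom _ _ _
      (Finset.mem_insert_of_mem (Finset.mem_erase.mpr ⟨hki, h1⟩)) ?_ ?_
    · intro m hm
      rcases Finset.mem_insert.mp hm with heqm | hm'
      · rw [heqm]; exact le_of_lt (lt_trans (Fin.lt_def.mpr hk) hlt)
      · exact h2 m (Finset.mem_erase.mp hm').2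
    · intro a ha b hb hab
      rcases Finset.mem_insert.mp ha with heqa | ha'
      · rcases Finset.mem_insert.mp hb with heqb | hb'
        · rw [heqa, heqb] at hab; exact absurd hab (lt_irrefl _)
        · rw [heqa] at hab ⊢
          obtain ⟨hbi, hbs⟩ := Finset.mem_erase.mp hb'
          have hbj : b ≠ j := fun e => hjs (e ▸ hbs)
          rw [Equiv.Perm.mul_apply, Equiv.Perm.mul_apply, Equiv.swap_apply_right,
            Equiv.swap_apply_of_ne_of_ne hbi hbj]
          exact h3 i hi b hbs (lt_trans hlt hab)
      · rcases Finset.mem_insert.mp hb with heqb | hb'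
        · rw [heqb] at hab ⊢
          obtain ⟨hai, has⟩ := Finset.mem_erase.mp ha'
          have haj : a ≠ j := ne_of_lt hab
          rw [Equiv.Perm.mul_apply, Equiv.Perm.mul_apply, Equiv.swap_apply_right,
            Equiv.swap_apply_of_ne_of_ne hai haj]
          have hailt : a < i := by
            rw [Fin.lt_def] at hab ⊢
            have : (a : ℕ) ≠ (i : ℕ) := fun e => hai (Fin.ext e)
            omega
          exact h3 a has i hi hailt
        · obtain ⟨hai, has⟩ := Finset.mem_erase.mp ha'
          obtain ⟨hbi, hbs⟩ := Finset.mem_erase.mp hb'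
          have haj : a ≠ j := fun e => hjs (e ▸ has)
          have hbj : b ≠ j := fun e => hjs (e ▸ hbs)
          rw [Equiv.Perm.mul_apply, Equiv.Perm.mul_apply,
            Equiv.swap_apply_of_ne_of_ne hai haj, Equiv.swap_apply_of_ne_of_ne hbi hbj]
          exact h3 a has b hbs hab
  · by_cases hj : j ∈ s
    · have hcard : (insert i (s.erase j)).card = s.card := by
        rw [Finset.card_insert_of_notMem (fun h => hi (Finset.mem_erase.mp h).2),
          Finset.card_erase_of_mem hj]
        have hc : 1 ≤ s.card := Finset.card_pos.mpr ⟨j, hj⟩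
        omega
      rw [← hcard]
      refine le_lisFrom _ _ _
        (Finset.mem_insert_of_mem (Finset.mem_erase.mpr ⟨hkj, h1⟩)) ?_ ?_
      · intro m hm
        rcases Finset.mem_insert.mp hm with heqm | hm'
        · rw [heqm]; exact le_of_lt (Fin.lt_def.mpr hk)
        · exact h2 m (Finset.mem_erase.mp hm').2
      · intro a ha b hb hab
        rcases Finset.mem_insert.mp ha with heqa | ha'
        · rcases Finset.mem_insert.mp hb with heqb | hb'
          · rw [heqa, heqb] at hab; exact absurd hab (lt_irrefl _)
          · rw [heqa] at hab ⊢
            obtain ⟨hbj, hbs⟩ := Finset.mem_erase.mp hb'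
            have hbi : b ≠ i := fun e => hi (e ▸ hbs)
            have hblt : j < b := by
              rw [Fin.lt_def] at hab ⊢
              have e1 : (b : ℕ) ≠ (i : ℕ) := fun e => hbi (Fin.ext e)
              have e2 : (b : ℕ) ≠ (j : ℕ) := fun e => hbj (Fin.ext e)
              omega
            rw [Equiv.Perm.mul_apply, Equiv.Perm.mul_apply, Equiv.swap_apply_left,
              Equiv.swap_apply_of_ne_of_ne hbi hbj]
            exact h3 j hj b hbs hblt
        · rcases Finset.mem_insert.mp hb with heqb | hb'
          · rw [heqb] at hab ⊢
            obtain ⟨haj, has⟩ := Finset.mem_erase.mp ha'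
            have hai : a ≠ i := fun e => hi (e ▸ has)
            rw [Equiv.Perm.mul_apply, Equiv.Perm.mul_apply, Equiv.swap_apply_left,
              Equiv.swap_apply_of_ne_of_ne hai haj]
            exact h3 a has j hj (lt_trans hab hlt)
          · obtain ⟨haj, has⟩ := Finset.mem_erase.mp ha'
            obtain ⟨hbj, hbs⟩ := Finset.mem_erase.mp hb'
            have hai : a ≠ i := fun e => hi (e ▸ has)
            have hbi : b ≠ i := fun e => hi (e ▸ hbs)
            rw [Equiv.Perm.mul_apply, Equiv.Perm.mul_apply,
              Equiv.swap_apply_of_ne_of_ne hai haj, Equiv.swap_apply_of_ne_of_ne hbi hbj]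
            exact h3 a has b hbs hab
    · refine le_lisFrom _ _ s h1 h2 ?_
      intro a ha b hb hab
      have hai : a ≠ i := fun e => hi (e ▸ ha)
      have haj : a ≠ j := fun e => hj (e ▸ ha)
      have hbi : b ≠ i := fun e => hi (e ▸ hb)
      have hbj : b ≠ j := fun e => hj (e ▸ hb)
      rw [Equiv.Perm.mul_apply, Equiv.Perm.mul_apply,
        Equiv.swap_apply_of_ne_of_ne hai haj, Equiv.swap_apply_of_ne_of_ne hbi hbj]
      exact h3 a ha b hb hab

private lemma a_ge {w : Equiv.Perm (Fin n)} {i j : Fin n}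
    (hij : (j : ℕ) = (i : ℕ) + 1) (hp : w⁻¹ j < w⁻¹ i) (k : Fin n) :
    lisFrom w k ≤ lisFrom (Equiv.swap i j * w) k := by
  refine lisFrom_le fun s h1 h2 h3 => le_lisFrom _ _ s h1 h2 ?_
  intro a ha b hb hab
  have hw := h3 a ha b hb hab
  rw [Fin.lt_def] at hw
  simp only [Equiv.Perm.mul_apply]
  rw [Fin.lt_def]
  rcases eq_or_ne (w a) i with hai | hai
  · have hbj : w b ≠ j := by
      intro e
      have ha' : a = w⁻¹ i := by rw [← hai]; simp
      have hb' : b = w⁻¹ j := by rw [← e]; simp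
      rw [ha', hb'] at hab
      exact absurd (lt_trans hp hab) (lt_irrefl _)
    have hbi : w b ≠ i := fun e => by rw [hai, e] at hw; omega
    rw [hai, Equiv.swap_apply_left, Equiv.swap_apply_of_ne_of_ne hbi hbj]
    have e1 : (w b : ℕ) ≠ (i : ℕ) := fun e => hbi (Fin.ext e)
    have e2 : (w b : ℕ) ≠ (j : ℕ) := fun e => hbj (Fin.ext e)
    rw [hai] at hw
    omega
  · rcases eq_or_ne (w a) j with haj | haj
    · have hbi : w b ≠ i := fun e => by
        rw [haj, e] at hw; omega
      have hbj : w b ≠ j := fun e => by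
        rw [haj, e] at hw; omega
      rw [haj, Equiv.swap_apply_right, Equiv.swap_apply_of_ne_of_ne hbi hbj]
      rw [haj] at hw
      omega
    · rw [Equiv.swap_apply_of_ne_of_ne hai haj]
      have e1 : (w a : ℕ) ≠ (i : ℕ) := fun e => hai (Fin.ext e)
      have e2 : (w a : ℕ) ≠ (j : ℕ) := fun e => haj (Fin.ext e)
      rcases eq_or_ne (w b) i with hbi | hbi
      · rw [hbi, Equiv.swap_apply_left]
        rw [hbi] at hw
        omega
      · rcases eq_or_ne (w b) j with hbj | hbj
        · rw [hbj, Equiv.swap_apply_right]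
          rw [hbj] at hw
          omega
        · rw [Equiv.swap_apply_of_ne_of_ne hbi hbj]
          omega

/-- Let `i, j` be consecutive (`j = i + 1`).
(a) If `s_i·w` (exchanging the values `i` and `i+1` in `w`) has one fewer inversion than
`w` and the same Rajchgot index, then it has the same Rajchgot code.
(b) If `w i > w j` (so `w·s_i`, exchanging the entries in positions `i` and `i+1`, has one
fewer inversion) and `raj(w·s_i) = raj(w)`, then the Rajchgot code of `w·s_i` is that of
`w` with entries `i, i+1` replaced by `r_{i+1}+1, r_i−1`. -/
theorem rajCode_of_cover (n : ℕ) (w : Equiv.Perm (Fin n)) (i j : Fin n)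
    (hij : (j : ℕ) = (i : ℕ) + 1) :
    (invNum (Equiv.swap i j * w) + 1 = invNum w →
      raj (Equiv.swap i j * w) = raj w →
      ∀ k : Fin n, rajCode (Equiv.swap i j * w) k = rajCode w k) ∧
    (w j < w i →
      raj (w * Equiv.swap i j) = raj w →
      rajCode (w * Equiv.swap i j) i = rajCode w j + 1 ∧
      rajCode (w * Equiv.swap i j) j + 1 = rajCode w i ∧
      ∀ k : Fin n, k ≠ i → k ≠ j → rajCode (w * Equiv.swap i j) k = rajCode w k) := by
  have hiltj : i < j := by rw [Fin.lt_def]; omega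
  have hinej : i ≠ j := ne_of_lt hiltj
  constructor
  · intro _ hraj k
    unfold raj at hraj
    rcases lt_trichotomy (w⁻¹ j) (w⁻¹ i) with hp | hp | hp
    · have hle : ∀ m : Fin n, rajCode (Equiv.swap i j * w) m ≤ rajCode w m := by
        intro m
        have h := a_ge hij hp m
        unfold rajCode
        omega
      exact (Finset.sum_eq_sum_iff_of_le (fun m _ => hle m)).mp hraj k (Finset.mem_univ k)
    · exact absurd (w⁻¹.injective hp) (Ne.symm hinej)
    · have hw'inv : (Equiv.swap i j * w)⁻¹ j < (Equiv.swap i j * w)⁻¹ i := by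
        have e1 : (Equiv.swap i j * w)⁻¹ j = w⁻¹ i := by
          simp [mul_inv_rev, Equiv.Perm.mul_apply]
        have e2 : (Equiv.swap i j * w)⁻¹ i = w⁻¹ j := by
          simp [mul_inv_rev, Equiv.Perm.mul_apply]
        rw [e1, e2]
        exact hp
      have hback : Equiv.swap i j * (Equiv.swap i j * w) = w := by
        rw [← mul_assoc, Equiv.swap_mul_self, one_mul]
      have hle : ∀ m : Fin n, rajCode w m ≤ rajCode (Equiv.swap i j * w) m := by
        intro m
        have h := a_ge hij hw'inv m
        rw [hback] at h
        unfold rajCode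
        omega
      exact ((Finset.sum_eq_sum_iff_of_le (fun m _ => hle m)).mp hraj.symm k
        (Finset.mem_univ k)).symm
  · intro hd hraj
    have hjn : (j : ℕ) < n := j.isLt
    have hLj : lisFrom w j ≤ n - (j : ℕ) := lisFrom_le_bound w j
    have hLi : lisFrom w i ≤ n - (i : ℕ) - 1 := lisFrom_le_bound' hij hd
    have hL'i : lisFrom w j ≤ lisFrom (w * Equiv.swap i j) i := b3ge hij
    have hL'j : lisFrom w i ≤ lisFrom (w * Equiv.swap i j) j := b2ge hij hd
    have hri : 1 ≤ rajCode w i := by unfold rajCode; omega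
    set G : Fin n → ℕ := fun k =>
      if k = i then rajCode w j + 1 else if k = j then rajCode w i - 1 else rajCode w k
      with hG
    have hGi : G i = rajCode w j + 1 := by rw [hG]; simp
    have hGj : G j = rajCode w i - 1 := by rw [hG]; simp [Ne.symm hinej]
    have hGo : ∀ k : Fin n, k ≠ i → k ≠ j → G k = rajCode w k := by
      intro k h1 h2; rw [hG]; simp [h1, h2]
    have hptle : ∀ k : Fin n, rajCode (w * Equiv.swap i j) k ≤ G k := by
      intro k
      rcases eq_or_ne k i with rfl | hki
      · rw [hGi]; unfold rajCode; omega
      rcases eq_or_ne k j with rfl | hkj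
      · rw [hGj]; unfold rajCode; omega
      rw [hGo k hki hkj]
      have hcase : (k : ℕ) < (i : ℕ) ∨ (j : ℕ) < (k : ℕ) := by
        have e1 : (k : ℕ) ≠ (i : ℕ) := fun e => hki (Fin.ext e)
        have e2 : (k : ℕ) ≠ (j : ℕ) := fun e => hkj (Fin.ext e)
        omega
      rcases hcase with h | h
      · have := b4ge hij hd h
        unfold rajCode
        omega
      · have := b1ge (w := w) hij h
        unfold rajCode
        omega
    have hsumG : ∑ k, G k = ∑ k, rajCode w k := by
      have hj' : j ∈ Finset.univ.erase i :=
        Finset.mem_erase.mpr ⟨Ne.symm hinej, Finset.mem_univ j⟩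
      rw [← Finset.add_sum_erase Finset.univ G (Finset.mem_univ i),
        ← Finset.add_sum_erase _ G hj',
        ← Finset.add_sum_erase Finset.univ (rajCode w) (Finset.mem_univ i),
        ← Finset.add_sum_erase _ (rajCode w) hj']
      have htail : ∑ k ∈ (Finset.univ.erase i).erase j, G k =
          ∑ k ∈ (Finset.univ.erase i).erase j, rajCode w k := by
        refine Finset.sum_congr rfl fun k hk => ?_
        obtain ⟨hkj, hk'⟩ := Finset.mem_erase.mp hk
        obtain ⟨hki, -⟩ := Finset.mem_erase.mp hk'
        exact hGo k hki hkj
      rw [htail, hGi, hGj]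
      omega
    have hsum' : ∑ k, rajCode (w * Equiv.swap i j) k = ∑ k, G k := by
      unfold raj at hraj
      rw [hraj, hsumG]
    have heq := (Finset.sum_eq_sum_iff_of_le (fun k _ => hptle k)).mp hsum'
    refine ⟨?_, ?_, ?_⟩
    · have := heq i (Finset.mem_univ i)
      rw [hGi] at this
      exact this
    · have := heq j (Finset.mem_univ j)
      rw [hGj] at this
      omega
    · intro k hki hkj
      have := heq k (Finset.mem_univ k)
      rw [hGo k hki hkj] at this
      exact this

end RajRegularity
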